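/- Let n ≥ 1 and let k : Fin n → ℝ satisfy 0 < k p ≤ 1 for every p. Let A_k be the multiplication operator on EuclideanSpace ℂ (Fin n) defined by (A_k x) p = (k p) · (x p). Let i* ∈ EuclideanSpace ℂ (Fin n) and J* = A_k(i*). Then the reverse-filtering iteration X⁰ = J*, X^{n+1} = Xⁿ + J* - A_k(Xⁿ) converges to i*; that is, a filter whose Fourier multiplier is real-valued in (0,1] is strictly reversed by fixed-point iteration. -/

import Mathlib

/-- The multiplication (Fourier-multiplier) operator with multiplier `k`. -/
def mulOp (n : ℕ) (k : Fin n → ℂ) (x : EuclideanSpace ℂ (Fin n)) :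
    EuclideanSpace ℂ (Fin n) :=
  WithLp.toLp 2 (fun p => k p * x p)

/-- A filter whose Fourier multiplier is real-valued in `(0,1]` is strictly
reversed by the fixed-point (reverse-filtering) iteration. -/
theorem multiplier_operator_reverse_iteration_converges
    (n : ℕ) (hn : 0 < n) (k : Fin n → ℝ)
    (hk : ∀ p : Fin n, 0 < k p ∧ k p ≤ 1)
    (istar Jstar : EuclideanSpace ℂ (Fin n))
    (hJ : Jstar = mulOp n (fun p => (k p : ℂ)) istar)
    (X : ℕ → EuclideanSpace ℂ (Fin n)) (hX0 : X 0 = Jstar)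
    (hX : ∀ m : ℕ, X (m + 1) = X m + Jstar - mulOp n (fun p => (k p : ℂ)) (X m)) :
    Filter.Tendsto X Filter.atTop (nhds istar) := by
  have key : ∀ m p, X m p - istar p = (1 - (k p : ℂ)) ^ m * (Jstar p - istar p) := by
    intro m
    induction m with
    | zero => intro p; simp [hX0]
    | succ m ih =>
      intro p
      have h1 : X (m + 1) p = X m p + Jstar p - (k p : ℂ) * X m p := by
        rw [hX m]; simp [mulOp]
      have hJp : Jstar p = (k p : ℂ) * istar p := by rw [hJ]; simp [mulOp]
      have h2 := ih p
      rw [h1]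
      have : X m p = (1 - (k p : ℂ)) ^ m * (Jstar p - istar p) + istar p := by
        linear_combination h2
      rw [this, hJp]
      ring
  have hco : ∀ p, Filter.Tendsto (fun m => X m p - istar p) Filter.atTop (nhds 0) := by
    intro p
    have hlt : ‖(1 - (k p : ℂ))‖ < 1 := by
      rw [show (1 - (k p : ℂ)) = ((1 - k p : ℝ) : ℂ) by push_cast; ring]
      rw [Complex.norm_real]
      rw [Real.norm_eq_abs, abs_lt]
      constructor
      · linarith [(hk p).2]
      · linarith [(hk p).1]
    have := tendsto_pow_atTop_nhds_zero_of_norm_lt_one hlt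
    have h := this.mul_const (Jstar p - istar p)
    simp only [zero_mul] at h
    exact h.congr fun m => (key m p).symm
  have hsub : Filter.Tendsto (fun m => X m - istar) Filter.atTop (nhds 0) := by
    rw [(PiLp.homeomorph 2 (fun _ : Fin n => ℂ)).isInducing.tendsto_nhds_iff, tendsto_pi_nhds]
    intro p
    have := hco p
    simpa [PiLp.homeomorph, Function.comp_def] using this
  have := hsub.add_const istar
  simpa using this
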